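/- Let ρ be a 3×3 density matrix and A a 3×3 Hermitian matrix with simple eigenvalues 1, 0, −1 and orthonormal eigenvectors |1⟩, |2⟩, |3⟩, and set p_j = ⟨j|ρ|j⟩. Then, with V(X) = Tr[ρX²] − (Tr[ρX])², one has p_1² + p_2² + p_3² = 1 − (1/2)·V(A) − (3/2)·V(A²). Equivalently, the collision entropy satisfies H₂(A) = −ln(p_1² + p_2² + p_3²) = −ln[1 − V(A)/2 − 3V(A²)/2]. -/

import Mathlib

open Matrix ComplexOrder

private lemma trace_mul_vecMulVec (ρ : Matrix (Fin 3) (Fin 3) ℂ) (u : Fin 3 → ℂ) :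
    (ρ * vecMulVec u (star u)).trace = star u ⬝ᵥ ρ *ᵥ u := by
  simp only [Matrix.trace, Matrix.diag, Matrix.mul_apply, vecMulVec_apply,
    dotProduct, mulVec, Pi.star_apply, Finset.mul_sum]
  refine Finset.sum_congr rfl fun i _ => Finset.sum_congr rfl fun k _ => ?_
  ring

private lemma vecMulVec_mul_vecMulVec (a b c d : Fin 3 → ℂ) :
    vecMulVec a (star b) * vecMulVec c (star d) =
      (star b ⬝ᵥ c) • vecMulVec a (star d) := by
  ext i j
  simp only [Matrix.mul_apply, vecMulVec_apply, Matrix.smul_apply, dotProduct,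
    Pi.star_apply, smul_eq_mul, Finset.sum_mul]
  refine Finset.sum_congr rfl fun k _ => ?_
  ring

private lemma sum_proj (v : Fin 3 → Fin 3 → ℂ)
    (hv : ∀ i j, star (v i) ⬝ᵥ v j = if i = j then 1 else 0) :
    ∑ j, vecMulVec (v j) (star (v j)) = 1 := by
  set M : Matrix (Fin 3) (Fin 3) ℂ := Matrix.of fun i j => v j i with hM
  have h1 : Mᴴ * M = 1 := by
    ext i j
    have := hv i j
    simpa [Matrix.mul_apply, Matrix.conjTranspose_apply, dotProduct, Matrix.one_apply,
      hM, mul_comm] using this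
  have h2 : M * Mᴴ = 1 := mul_eq_one_comm.mp h1
  ext i j
  have := congrFun (congrFun h2 i) j
  simp only [Matrix.mul_apply, Matrix.conjTranspose_apply, hM, Matrix.of_apply] at this
  simpa [Matrix.sum_apply, Finset.sum_apply, vecMulVec_apply] using this

theorem spin1_collision_entropy_from_variances
    (ρ A : Matrix (Fin 3) (Fin 3) ℂ)
    (hρ : ρ.PosSemidef) (hρtr : ρ.trace = 1)
    (v : Fin 3 → Fin 3 → ℂ)
    (hv : ∀ i j, star (v i) ⬝ᵥ v j = if i = j then 1 else 0)
    (hA : A = vecMulVec (v 0) (star (v 0)) - vecMulVec (v 2) (star (v 2)))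
    (p : Fin 3 → ℝ)
    (hp : ∀ j, star (v j) ⬝ᵥ ρ *ᵥ v j = (p j : ℂ))
    (VA VA2 : ℝ)
    (hVA : (ρ * (A * A)).trace - ((ρ * A).trace) ^ 2 = (VA : ℂ))
    (hVA2 : (ρ * ((A * A) * (A * A))).trace - ((ρ * (A * A)).trace) ^ 2 = (VA2 : ℂ)) :
    p 0 ^ 2 + p 1 ^ 2 + p 2 ^ 2 = 1 - VA / 2 - 3 * VA2 / 2 ∧
    -Real.log (p 0 ^ 2 + p 1 ^ 2 + p 2 ^ 2) =
      -Real.log (1 - VA / 2 - 3 * VA2 / 2) := by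
  set P : Fin 3 → Matrix (Fin 3) (Fin 3) ℂ := fun j => vecMulVec (v j) (star (v j)) with hP
  -- A² = P 0 + P 2
  have hA2 : A * A = P 0 + P 2 := by
    rw [hA]
    have h20 : (2 : Fin 3) ≠ 0 := by decide
    have h02 : (0 : Fin 3) ≠ 2 := by decide
    simp only [sub_mul, mul_sub, vecMulVec_mul_vecMulVec, hv, if_pos rfl, if_neg h20,
      if_neg h02, one_smul, zero_smul, sub_zero, zero_sub, sub_neg_eq_add, hP, if_true]
  -- (A²)² = A²
  have hA4 : (A * A) * (A * A) = A * A := by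
    rw [hA2]
    have h20 : (2 : Fin 3) ≠ 0 := by decide
    have h02 : (0 : Fin 3) ≠ 2 := by decide
    simp only [hP, add_mul, mul_add, vecMulVec_mul_vecMulVec, hv, if_pos rfl, if_neg h20,
      if_neg h02, one_smul, zero_smul, add_zero, zero_add, if_true]
  -- traces
  have htrP : ∀ j, (ρ * P j).trace = (p j : ℂ) := fun j => by
    rw [hP, trace_mul_vecMulVec, hp]
  have htrA : (ρ * A).trace = (p 0 : ℂ) - (p 2 : ℂ) := by
    rw [hA, mul_sub, Matrix.trace_sub, htrP 0, htrP 2]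
  have htrA2 : (ρ * (A * A)).trace = (p 0 : ℂ) + (p 2 : ℂ) := by
    rw [hA2, mul_add, Matrix.trace_add, htrP 0, htrP 2]
  -- sum of p's is 1
  have hsumC : (p 0 : ℂ) + p 1 + p 2 = 1 := by
    have h := sum_proj v hv
    have : (ρ * ∑ j, P j).trace = 1 := by rw [hP, h, mul_one, hρtr]
    rw [Finset.mul_sum, Matrix.trace_sum, Fin.sum_univ_three, htrP 0, htrP 1, htrP 2] at this
    exact this
  have hsum : p 0 + p 1 + p 2 = 1 := by exact_mod_cast hsumC
  -- real variance equations
  have hVA' : p 0 + p 2 - (p 0 - p 2) ^ 2 = VA := by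
    have : ((p 0 + p 2 - (p 0 - p 2) ^ 2 : ℝ) : ℂ) = (VA : ℂ) := by
      push_cast
      rw [← hVA, htrA2, htrA]
    exact_mod_cast this
  have hVA2' : p 0 + p 2 - (p 0 + p 2) ^ 2 = VA2 := by
    have : ((p 0 + p 2 - (p 0 + p 2) ^ 2 : ℝ) : ℂ) = (VA2 : ℂ) := by
      push_cast
      rw [← hVA2, hA4, htrA2]
    exact_mod_cast this
  have hp1 : p 1 = 1 - p 0 - p 2 := by linarith
  have key : p 0 ^ 2 + p 1 ^ 2 + p 2 ^ 2 = 1 - VA / 2 - 3 * VA2 / 2 := by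
    rw [← hVA', ← hVA2', hp1]; ring
  exact ⟨key, by rw [key]⟩
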